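/- arXiv:0909.2421 — 2 statements merged into one kernel-verified Lean document; each statement's English description precedes it below -/
import Mathlib

section
/- If K ∈ SL(2,ℝ) has trace(K) > −2, then there exist exactly two matrices A ∈ SL(2,ℝ) with A² = K, and they are negatives of each other. Consequently there is a unique element of PSL(2,ℝ) squaring to the class of K. -/
/-- Cayley–Hamilton for 2×2 real matrices. -/
lemma ch2 (A : Matrix (Fin 2) (Fin 2) ℝ) :
    A * A = A.trace • A - A.det • (1 : Matrix (Fin 2) (Fin 2) ℝ) := by
  ext i j
  fin_cases i <;> fin_cases j <;>
    simp [Matrix.mul_apply, Matrix.trace_fin_two, Matrix.det_fin_two,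
      Fin.sum_univ_succ, Matrix.one_apply] <;> ring

lemma det_add_one (K : Matrix (Fin 2) (Fin 2) ℝ) (hK : K.det = 1) :
    (K + 1).det = K.trace + 2 := by
  have h := hK
  rw [Matrix.det_fin_two] at h ⊢
  simp only [Matrix.add_apply, Matrix.one_apply, Matrix.trace_fin_two]
  norm_num
  linarith

theorem exactly_two_square_roots
    (K : Matrix (Fin 2) (Fin 2) ℝ) (hK : K.det = 1) (htr : K.trace > -2) :
    (∃ A : Matrix (Fin 2) (Fin 2) ℝ, A.det = 1 ∧ A * A = K) ∧
    (∀ A B : Matrix (Fin 2) (Fin 2) ℝ, A.det = 1 → B.det = 1 →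
      A * A = K → B * B = K → B = A ∨ B = -A) := by
  have h2 : (0:ℝ) < K.trace + 2 := by linarith
  constructor
  · set t : ℝ := Real.sqrt (K.trace + 2) with htdef
    have ht2 : t ^ 2 = K.trace + 2 := Real.sq_sqrt h2.le
    have htpos : 0 < t := Real.sqrt_pos.2 h2
    refine ⟨t⁻¹ • (K + 1), ?_, ?_⟩
    · rw [Matrix.det_smul, det_add_one K hK]
      rw [Fintype.card_fin]
      field_simp
      rw [← ht2]
    · have htrA : (t⁻¹ • (K + 1)).trace = t := by
        rw [Matrix.trace_smul, Matrix.trace_add, Matrix.trace_one]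
        simp only [smul_eq_mul]
        field_simp
        rw [ht2, Fintype.card_fin]; norm_num
      have hdetA : (t⁻¹ • (K + 1)).det = 1 := by
        rw [Matrix.det_smul, det_add_one K hK, Fintype.card_fin]
        field_simp
        rw [← ht2]
      rw [ch2, htrA, hdetA, one_smul, smul_smul, mul_inv_cancel₀ htpos.ne',
        one_smul]
      abel
  · intro A B hA hB hA2 hB2
    have eA : A.trace • A = K + 1 := by
      have := ch2 A
      rw [hA2, hA, one_smul] at this
      rw [this]; abel
    have eB : B.trace • B = K + 1 := by
      have := ch2 B
      rw [hB2, hB, one_smul] at this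
      rw [this]; abel
    have trA2 : A.trace ^ 2 = K.trace + 2 := by
      have := congrArg Matrix.trace eA
      rw [Matrix.trace_smul, Matrix.trace_add, Matrix.trace_one] at this
      have htrAA : A.trace * A.trace = A.trace * A.trace := rfl
      have : A.trace * A.trace = K.trace + 2 := by simpa using this
      nlinarith [this]
    have trB2 : B.trace ^ 2 = K.trace + 2 := by
      have := congrArg Matrix.trace eB
      rw [Matrix.trace_smul, Matrix.trace_add, Matrix.trace_one] at this
      have : B.trace * B.trace = K.trace + 2 := by simpa using this
      nlinarith [this]
    have hAne : A.trace ≠ 0 := by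
      intro h; rw [h] at trA2; simp at trA2; linarith
    have hsq : B.trace ^ 2 = A.trace ^ 2 := by rw [trA2, trB2]
    have hBne : B.trace ≠ 0 := by
      intro h; rw [h] at trB2; simp at trB2; linarith
    rcases sq_eq_sq_iff_eq_or_eq_neg.mp hsq with h | h
    · left
      have hBA : B.trace • B = B.trace • A := by rw [eB, h, eA]
      exact smul_right_injective _ hBne hBA
    · right
      have hBA : B.trace • B = B.trace • (-A) := by
        rw [eB, h, neg_smul, smul_neg, neg_neg, eA]
      exact smul_right_injective _ hBne hBA
end

section
/- The fiber over −I of the square map Q : PSL(2,ℝ) → SL(2,ℝ), Q([A]) = A², is exactly the conjugacy class of [J] in PSL(2,ℝ), where J = [[0,−1],[1,0]]. -/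
abbrev SL2R := Matrix.SpecialLinearGroup (Fin 2) ℝ
abbrev PSL2R := SL2R ⧸ Subgroup.center SL2R

def Jmat : SL2R := ⟨!![0, -1; 1, 0], by norm_num [Matrix.det_fin_two_of]⟩

def Nsl : SL2R := ⟨-1, by simp [Matrix.det_neg]⟩

lemma neg_one_fin_two : (-1 : Matrix (Fin 2) (Fin 2) ℝ) = !![-1, 0; 0, -1] := by
  rw [show (-1 : Matrix (Fin 2) (Fin 2) ℝ) = -(1:Matrix (Fin 2) (Fin 2) ℝ) from rfl,
    Matrix.one_fin_two]
  norm_num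

lemma Nsl_center : Nsl ∈ Subgroup.center SL2R := by
  rw [Subgroup.mem_center_iff]
  intro g
  apply Subtype.ext
  rw [Matrix.SpecialLinearGroup.coe_mul, Matrix.SpecialLinearGroup.coe_mul]
  simp [Nsl, Matrix.SpecialLinearGroup.coe_mul]

lemma mk_Nsl : (QuotientGroup.mk Nsl : PSL2R) = 1 :=
  (QuotientGroup.eq_one_iff _).mpr Nsl_center

lemma J_sq : Jmat * Jmat = Nsl := by
  apply Subtype.ext
  rw [Matrix.SpecialLinearGroup.coe_mul]
  simp only [Matrix.SpecialLinearGroup.coe_mul, Jmat, Nsl, neg_one_fin_two]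
  norm_num [Matrix.mul_fin_two]

theorem fiber_over_neg_one_is_conjugacy_class :
    {a : PSL2R | ∃ A : SL2R, QuotientGroup.mk A = a ∧
        (A : Matrix (Fin 2) (Fin 2) ℝ) * A = -1}
      = {a : PSL2R | ∃ g : PSL2R, a = g * (QuotientGroup.mk Jmat) * g⁻¹} := by
  ext x
  simp only [Set.mem_setOf_eq]
  constructor
  · rintro ⟨A, rfl, hA⟩
    set a := (A : Matrix (Fin 2) (Fin 2) ℝ) 0 0 with ha
    set b := (A : Matrix (Fin 2) (Fin 2) ℝ) 0 1 with hb
    set c := (A : Matrix (Fin 2) (Fin 2) ℝ) 1 0 with hc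
    set d := (A : Matrix (Fin 2) (Fin 2) ℝ) 1 1 with hd
    have hAe : (A : Matrix (Fin 2) (Fin 2) ℝ) = !![a, b; c, d] := by
      rw [ha, hb, hc, hd]; exact Matrix.etaExpand_eq (A : Matrix (Fin 2) (Fin 2) ℝ) ▸ rfl
    rw [hAe, neg_one_fin_two, Matrix.mul_fin_two] at hA
    have e00 : a * a + b * c = -1 := by
      have := congrFun (congrFun hA 0) 0; simpa using this
    have e01 : a * b + b * d = 0 := by
      have := congrFun (congrFun hA 0) 1; simpa using this
    have e10 : c * a + d * c = 0 := by
      have := congrFun (congrFun hA 1) 0; simpa using this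
    have hdet : a * d - b * c = 1 := by
      have := A.2
      rwa [Matrix.det_fin_two, ← ha, ← hb, ← hc, ← hd] at this
    have hda : d = -a := by
      rcases eq_or_ne (a + d) 0 with h | h
      · linarith
      · exfalso
        have hb0 : b = 0 := by
          rcases mul_eq_zero.mp (show b * (a + d) = 0 by linarith [e01]) with h' | h'
          · exact h'
          · exact absurd h' h
        have hc0 : c = 0 := by
          rcases mul_eq_zero.mp (show c * (a + d) = 0 by linarith [e10]) with h' | h'
          · exact h'
          · exact absurd h' h
        rw [hb0, hc0] at e00
        nlinarith
    have hbc : b * c = -1 - a * a := by linarith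
    have hcne : c ≠ 0 := by
      intro h
      rw [h] at hbc
      nlinarith
    rcases hcne.lt_or_gt with hcn | hcp
    · -- c < 0 : conjugate to -A
      set s := Real.sqrt (-c) with hs
      have hspos : 0 < s := Real.sqrt_pos.mpr (by linarith)
      have hs2 : s * s = -c := Real.mul_self_sqrt (by linarith)
      have hsne : s ≠ 0 := ne_of_gt hspos
      set G : SL2R := ⟨!![1/s, -(a/s); 0, -(c/s)], by
        rw [Matrix.det_fin_two_of]
        field_simp
        linarith⟩ with hG
      refine ⟨QuotientGroup.mk G, ?_⟩
      have key : Nsl * A = G * Jmat * G⁻¹ := by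
        rw [eq_mul_inv_iff_mul_eq]
        apply Subtype.ext
        rw [Matrix.SpecialLinearGroup.coe_mul, Matrix.SpecialLinearGroup.coe_mul, Matrix.SpecialLinearGroup.coe_mul]
        simp only [Matrix.SpecialLinearGroup.coe_mul, hG, Jmat, Nsl, hAe, hda]
        ext i j
        fin_cases i <;> fin_cases j <;>
          simp [Matrix.mul_apply, Fin.sum_univ_two] <;>
          field_simp <;> nlinarith
      calc (QuotientGroup.mk A : PSL2R) = QuotientGroup.mk (Nsl * A) := by
            rw [QuotientGroup.mk_mul, mk_Nsl, one_mul]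
        _ = QuotientGroup.mk (G * Jmat * G⁻¹) := by rw [key]
        _ = _ := by rw [QuotientGroup.mk_mul, QuotientGroup.mk_mul, QuotientGroup.mk_inv]
    · -- c > 0
      set s := Real.sqrt c with hs
      have hspos : 0 < s := Real.sqrt_pos.mpr hcp
      have hs2 : s * s = c := Real.mul_self_sqrt (le_of_lt hcp)
      have hsne : s ≠ 0 := ne_of_gt hspos
      set G : SL2R := ⟨!![1/s, a/s; 0, c/s], by
        rw [Matrix.det_fin_two_of]
        field_simp
        linarith⟩ with hG
      refine ⟨QuotientGroup.mk G, ?_⟩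
      have key : A = G * Jmat * G⁻¹ := by
        rw [eq_mul_inv_iff_mul_eq]
        apply Subtype.ext
        rw [Matrix.SpecialLinearGroup.coe_mul, Matrix.SpecialLinearGroup.coe_mul]
        simp only [Matrix.SpecialLinearGroup.coe_mul, hG, Jmat, hAe, hda]
        ext i j
        fin_cases i <;> fin_cases j <;>
          simp [Matrix.mul_apply, Fin.sum_univ_two] <;>
          field_simp <;> nlinarith
      rw [key, QuotientGroup.mk_mul, QuotientGroup.mk_mul, QuotientGroup.mk_inv]
  · rintro ⟨g, rfl⟩
    obtain ⟨g', rfl⟩ := QuotientGroup.mk_surjective g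
    refine ⟨g' * Jmat * g'⁻¹, ?_, ?_⟩
    · rw [QuotientGroup.mk_mul, QuotientGroup.mk_mul, QuotientGroup.mk_inv]
    · have : (g' * Jmat * g'⁻¹) * (g' * Jmat * g'⁻¹) = Nsl := by
        have h1 : (g' * Jmat * g'⁻¹) * (g' * Jmat * g'⁻¹) = g' * (Jmat * Jmat) * g'⁻¹ := by
          group
        rw [h1, J_sq]
        have h2 := (Subgroup.mem_center_iff.mp Nsl_center) g'⁻¹
        rw [mul_assoc, ← h2, ← mul_assoc, mul_inv_cancel, one_mul]
      calc ((g' * Jmat * g'⁻¹ : SL2R) : Matrix (Fin 2) (Fin 2) ℝ) * (g' * Jmat * g'⁻¹ : SL2R)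
          = ((g' * Jmat * g'⁻¹) * (g' * Jmat * g'⁻¹) : SL2R) := rfl
        _ = (Nsl : Matrix (Fin 2) (Fin 2) ℝ) := by rw [this]
        _ = -1 := rfl
end
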